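/- arXiv:2006.14934 — 3 statements merged into one kernel-verified Lean document; each statement's English description precedes it below -/
import Mathlib

section
/- Let A be a commutative ring, B a commutative A[t,t⁻¹]-algebra that is finite free as an A[t,t⁻¹]-module, and f ∈ B. Then there exists N such that for all n > N, multiplication by (1 − tⁿ·f) on B ⊗_A A' is injective for every A-module A'; that is, (1 − tⁿ f) : B → B is universally injective over A. -/
open LaurentPolynomial

section Aux

open AddMonoidAlgebra Finsupp TensorProduct
open LaurentPolynomial AddMonoidAlgebra Finsupp

variable {A : Type*} [CommRing A]

/-- The identity equivalence between Laurent polynomials and finitely supported functions. -/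
noncomputable def lEquiv (A : Type*) [CommRing A] : LaurentPolynomial A ≃ₗ[A] (ℤ →₀ A) where
  toFun p := p.coeff
  invFun p := AddMonoidAlgebra.ofCoeff p
  map_add' _ _ := rfl
  map_smul' _ _ := rfl
  left_inv _ := rfl
  right_inv _ := rfl

/-- The monomial basis of Laurent polynomials over the base ring. -/
noncomputable def lbasis (A : Type*) [CommRing A] : Module.Basis ℤ A (LaurentPolynomial A) :=
  Module.Basis.ofRepr (lEquiv A)

lemma lbasis_repr_apply (p : LaurentPolynomial A) (k : ℤ) : (lbasis A).repr p k = p.coeff k := rfl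

lemma lbasis_apply (k : ℤ) : lbasis A k = T k := by
  show (lEquiv A).symm (Finsupp.single k 1) = _
  rfl

/-- support in nonnegative degrees -/
def LPos (p : LaurentPolynomial A) : Prop := ∀ k : ℤ, k < 0 → p.coeff k = 0
/-- support in positive degrees -/
def LPos' (p : LaurentPolynomial A) : Prop := ∀ k : ℤ, k ≤ 0 → p.coeff k = 0

lemma LPos.of' {p : LaurentPolynomial A} (h : LPos' p) : LPos p := fun k hk => h k hk.le

lemma LPos.one : LPos (1 : LaurentPolynomial A) := by
  intro k hk
  show (Finsupp.single (0:ℤ) (1:A)) k = 0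
  rw [Finsupp.single_apply, if_neg (by omega)]

lemma LPos'.neg {p : LaurentPolynomial A} (h : LPos' p) : LPos' (-p) := by
  intro k hk; show -(p.coeff k) = 0; rw [h k hk, neg_zero]

lemma LPos'.add {p q : LaurentPolynomial A} (hp : LPos' p) (hq : LPos' q) : LPos' (p + q) := by
  intro k hk; show p.coeff k + q.coeff k = 0; rw [hp k hk, hq k hk, add_zero]

lemma LPos'.zsmul {p : LaurentPolynomial A} (h : LPos' p) (z : ℤ) : LPos' (z • p) := by
  intro k hk; show z • p.coeff k = 0; rw [h k hk, smul_zero]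

lemma mem_supp {p : LaurentPolynomial A} {k : ℤ} (h : k ∈ p.coeff.support) : p.coeff k ≠ 0 :=
  Finsupp.mem_support_iff.1 h

lemma LPos.mul {p q : LaurentPolynomial A} (hp : LPos p) (hq : LPos q) : LPos (p * q) := by
  classical
  intro k hk
  by_contra h
  obtain ⟨a, ha, b, hb, hab⟩ : ∃ a ∈ p.coeff.support, ∃ b ∈ q.coeff.support, k = a + b := by
    have := AddMonoidAlgebra.support_coeff_mul_subset p q (Finsupp.mem_support_iff.2 h)
    simpa [Finset.mem_add, eq_comm] using this
  have h1 : ¬ a < 0 := fun h' => mem_supp ha (hp a h')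
  have h2 : ¬ b < 0 := fun h' => mem_supp hb (hq b h')
  omega

lemma LPos.mul' {p q : LaurentPolynomial A} (hp : LPos p) (hq : LPos' q) : LPos' (p * q) := by
  classical
  intro k hk
  by_contra h
  obtain ⟨a, ha, b, hb, hab⟩ : ∃ a ∈ p.coeff.support, ∃ b ∈ q.coeff.support, k = a + b := by
    have := AddMonoidAlgebra.support_coeff_mul_subset p q (Finsupp.mem_support_iff.2 h)
    simpa [Finset.mem_add, eq_comm] using this
  have h1 : ¬ a < 0 := fun h' => mem_supp ha (hp a h')
  have h2 : ¬ b ≤ 0 := fun h' => mem_supp hb (hq b h')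
  omega

lemma LPos'.mul_left {p q : LaurentPolynomial A} (hp : LPos' p) (hq : LPos q) : LPos' (p * q) := by
  rw [mul_comm]; exact hq.mul' hp


lemma LPos'.zero : LPos' (0 : LaurentPolynomial A) := fun _ _ => rfl

lemma LPos.prod {ι : Type*} (s : Finset ι) (f : ι → LaurentPolynomial A)
    (h : ∀ i ∈ s, LPos (f i)) : LPos (∏ i ∈ s, f i) := by
  classical
  induction s using Finset.induction_on with
  | empty => simpa using LPos.one
  | @insert a s' hx ih =>
      rw [Finset.prod_insert hx]
      exact (h a (Finset.mem_insert_self a s')).mul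
        (ih fun i hi => h i (Finset.mem_insert_of_mem hi))

lemma LPos'.prod_one_add {ι : Type*} (s : Finset ι) (f : ι → LaurentPolynomial A)
    (h : ∀ i ∈ s, LPos' (f i)) : LPos' ((∏ i ∈ s, (1 + f i)) - 1) := by
  classical
  induction s using Finset.induction_on with
  | empty => simpa using LPos'.zero
  | @insert a s' hx ih =>
      have hfa : LPos' (f a) := h a (Finset.mem_insert_self a s')
      have ihs : LPos' ((∏ i ∈ s', (1 + f i)) - 1) :=
        ih fun i hi => h i (Finset.mem_insert_of_mem hi)
      rw [Finset.prod_insert hx]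
      have heq : (1 + f a) * ∏ i ∈ s', (1 + f i) - 1
          = f a + (((∏ i ∈ s', (1 + f i)) - 1) + f a * ((∏ i ∈ s', (1 + f i)) - 1)) := by ring
      rw [heq]
      exact hfa.add (ihs.add ((LPos.of' hfa).mul' ihs))

lemma T_mul_coeff (p : LaurentPolynomial A) (n k : ℤ) :
    (T n * p : LaurentPolynomial A).coeff k = p.coeff (-n + k) := by
  simpa using AddMonoidAlgebra.coeff_single_mul_apply p (1:A) n k

lemma LPos.sub' {p q : LaurentPolynomial A} (hp : LPos p) (hq : LPos' q) : LPos (p - q) := by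
  intro k hk; show p.coeff k - q.coeff k = 0; rw [hp k hk, hq k hk.le, sub_zero]

lemma LPos'.sum {ι : Type*} (s : Finset ι) (f : ι → LaurentPolynomial A)
    (h : ∀ i ∈ s, LPos' (f i)) : LPos' (∑ i ∈ s, f i) := by
  classical
  induction s using Finset.induction_on with
  | empty => simpa using LPos'.zero
  | @insert a s' hx ih =>
      rw [Finset.sum_insert hx]
      exact (h a (Finset.mem_insert_self a s')).add
        (ih fun i hi => h i (Finset.mem_insert_of_mem hi))

lemma LPos'.usmul {p : LaurentPolynomial A} (u : ℤˣ) (h : LPos' p) : LPos' (u • p) := by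
  rw [Units.smul_def]; exact h.zsmul _

lemma LPos.ite {P : Prop} [Decidable P] : LPos (if P then (1:LaurentPolynomial A) else 0) := by
  split
  · exact LPos.one
  · exact fun k _ => rfl

lemma det_one_sub_T_smul {ι : Type*} [Fintype ι] [DecidableEq ι]
    (M : Matrix ι ι (LaurentPolynomial A)) (r : ℕ)
    (hM : ∀ i j, ∀ k : ℤ, k < -(r:ℤ) → (M i j).coeff k = 0) (n : ℕ) (hn : (r:ℤ) < n) :
    LPos' ((1 - (T (n:ℤ) : LaurentPolynomial A) • M).det - 1) := by
  classical
  set X : Matrix ι ι (LaurentPolynomial A) := 1 - (T (n:ℤ) : LaurentPolynomial A) • M with hX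
  have hentry : ∀ i j, X i j = (if i = j then 1 else 0) - T (n:ℤ) * M i j := by
    intro i j
    simp [hX, Matrix.one_apply, Matrix.sub_apply, Matrix.smul_apply, smul_eq_mul]
  have hQ : ∀ i j, LPos' (T (n:ℤ) * M i j : LaurentPolynomial A) := by
    intro i j k hk
    rw [T_mul_coeff]
    exact hM i j _ (by omega)
  have hP : ∀ i j, LPos (X i j) := by
    intro i j
    rw [hentry]
    exact LPos.ite.sub' (hQ i j)
  rw [Matrix.det_apply]
  rw [← Finset.add_sum_erase Finset.univ _ (Finset.mem_univ (1 : Equiv.Perm ι))]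
  have h1 : Equiv.Perm.sign (1 : Equiv.Perm ι) • ∏ i, X ((1 : Equiv.Perm ι) i) i
      = ∏ i, X i i := by simp
  rw [h1]
  have hre : ∏ i, X i i + (∑ x ∈ Finset.univ.erase (1 : Equiv.Perm ι),
        Equiv.Perm.sign x • ∏ i, X (x i) i) - 1
      = ((∏ i, X i i) - 1) + ∑ x ∈ Finset.univ.erase (1 : Equiv.Perm ι),
        Equiv.Perm.sign x • ∏ i, X (x i) i := by ring
  rw [hre]
  refine LPos'.add ?_ (LPos'.sum _ _ ?_)
  · have : ∀ i ∈ (Finset.univ : Finset ι), X i i = 1 + (-(T (n:ℤ) * M i i)) := by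
      intro i _
      rw [hentry, if_pos rfl, sub_eq_add_neg]
    rw [Finset.prod_congr rfl this]
    exact LPos'.prod_one_add _ _ fun i _ => (hQ i i).neg
  · intro σ hσ
    have hσ1 : σ ≠ 1 := (Finset.mem_erase.1 hσ).1
    obtain ⟨i₀, hi₀⟩ : ∃ i, σ i ≠ i := by
      by_contra h
      push_neg at h
      exact hσ1 (Equiv.ext h)
    refine LPos'.usmul _ ?_
    rw [← Finset.mul_prod_erase Finset.univ _ (Finset.mem_univ i₀)]
    have : X (σ i₀) i₀ = -(T (n:ℤ) * M (σ i₀) i₀) := by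
      rw [hentry, if_neg hi₀, zero_sub]
    rw [this]
    exact ((hQ (σ i₀) i₀).neg).mul_left (LPos.prod _ _ fun i _ => hP _ _)


variable {A : Type*} [CommRing A]

/-- the induced map on `κ →₀ A'` -/
noncomputable def PhiMap {κ : Type*} (φ : (κ →₀ A) →ₗ[A] (κ →₀ A))
    (A' : Type*) [AddCommGroup A'] [Module A A'] : (κ →₀ A') →ₗ[A] (κ →₀ A') :=
  Finsupp.lsum ℕ fun l => (φ (Finsupp.single l 1)).sum fun k c => c • Finsupp.lsingle k

lemma PhiMap_single {κ : Type*} (φ : (κ →₀ A) →ₗ[A] (κ →₀ A))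
    {A' : Type*} [AddCommGroup A'] [Module A A'] (l : κ) (x : A') :
    PhiMap φ A' (Finsupp.single l x)
      = (φ (Finsupp.single l 1)).sum fun k c => Finsupp.single k (c • x) := by
  rw [PhiMap, Finsupp.lsum_single]
  rw [LinearMap.finsupp_sum_apply]
  exact Finsupp.sum_congr fun k hk => by simp

lemma PhiMap_natural {κ : Type*} [DecidableEq κ] (φ : (κ →₀ A) →ₗ[A] (κ →₀ A))
    {A' : Type*} [AddCommGroup A'] [Module A A'] (x : (κ →₀ A) ⊗[A] A') :
    finsuppScalarLeft A A' κ (LinearMap.rTensor A' φ x)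
      = PhiMap φ A' (finsuppScalarLeft A A' κ x) := by
  induction x with
  | zero => simp
  | add u v hu hv => simp [map_add, hu, hv]
  | tmul p a' =>
      rw [LinearMap.rTensor_tmul]
      induction p using Finsupp.induction_linear with
      | zero => simp
      | add u v hu hv => simp [add_tmul, map_add, hu, hv, -finsuppScalarLeft_apply_tmul_apply]
      | single l a =>
          conv_rhs => rw [finsuppScalarLeft_apply_tmul, Finsupp.sum_single_index (by simp),
            PhiMap_single]
          have h1 : Finsupp.single l a = a • Finsupp.single l (1:A) := by
            rw [Finsupp.smul_single, smul_eq_mul, mul_one]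
          rw [h1, map_smul, ← smul_tmul', map_smul, finsuppScalarLeft_apply_tmul,
            Finsupp.smul_sum]
          exact Finsupp.sum_congr fun k hk => by
            rw [Finsupp.smul_single, smul_comm]

lemma PhiMap_coeff {κ : Type*} [DecidableEq κ] (φ : (κ →₀ A) →ₗ[A] (κ →₀ A))
    {A' : Type*} [AddCommGroup A'] [Module A A'] (q : κ →₀ A') (k₀ : κ) :
    PhiMap φ A' q k₀ = q.sum fun l x => (φ (Finsupp.single l 1)) k₀ • x := by
  rw [PhiMap, Finsupp.lsum_apply, Finsupp.sum_apply]
  apply Finsupp.sum_congr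
  intro l _
  rw [LinearMap.finsupp_sum_apply, Finsupp.sum_apply]
  have : ((φ (Finsupp.single l 1)).sum fun k c =>
      ((c • Finsupp.lsingle k : A' →ₗ[A] κ →₀ A') (q l)) k₀)
      = (φ (Finsupp.single l 1)).sum fun k c =>
        if k = k₀ then c • q l else 0 := by
    apply Finsupp.sum_congr
    intro k _
    simp [Finsupp.single_apply]
  rw [this, Finsupp.sum_ite_eq']
  split
  · rfl
  · rename_i hk
    rw [Finsupp.notMem_support_iff.1 hk, zero_smul]

lemma PhiMap_injective {κ : Type*} [DecidableEq κ] (w : κ → ℤ)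
    (φ : (κ →₀ A) →ₗ[A] (κ →₀ A))
    (h1 : ∀ k l, φ (Finsupp.single l 1) k ≠ 0 → w l ≤ w k)
    (h2 : ∀ k l, w k = w l → φ (Finsupp.single l 1) k = if k = l then 1 else 0)
    {A' : Type*} [AddCommGroup A'] [Module A A'] :
    Function.Injective (PhiMap φ A') := by
  have key : ∀ q : κ →₀ A', PhiMap φ A' q = 0 → q = 0 := by
    intro q hq
    by_contra hq0
    have hsupp : q.support.Nonempty := Finsupp.support_nonempty_iff.2 hq0
    have hW : (q.support.image w).Nonempty := hsupp.image w
    set w₀ := (q.support.image w).min' hW with hw₀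
    obtain ⟨l₀, hl₀, hwl₀⟩ := Finset.mem_image.1 ((q.support.image w).min'_mem hW)
    have hzero : PhiMap φ A' q l₀ = 0 := by rw [hq]; rfl
    rw [PhiMap_coeff] at hzero
    rw [Finsupp.sum, Finset.sum_eq_single_of_mem l₀ hl₀] at hzero
    · rw [h2 l₀ l₀ rfl, if_pos rfl, one_smul] at hzero
      exact Finsupp.mem_support_iff.1 hl₀ hzero
    · intro l hl hne
      by_cases hc : φ (Finsupp.single l 1) l₀ = 0
      · rw [hc, zero_smul]
      · have hle : w l ≤ w l₀ := h1 l₀ l hc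
        have hge : w₀ ≤ w l := Finset.min'_le _ _ (Finset.mem_image_of_mem w hl)
        have heq : w l₀ = w l := by omega
        rw [h2 l₀ l heq, if_neg (fun h => hne h.symm), zero_smul]
  intro x y hxy
  have := key (x - y) (by rw [map_sub, hxy, sub_self])
  exact sub_eq_zero.1 this

lemma rTensor_injective_of_triangular {κ : Type*} [DecidableEq κ] (w : κ → ℤ)
    (φ : (κ →₀ A) →ₗ[A] (κ →₀ A))
    (h1 : ∀ k l, φ (Finsupp.single l 1) k ≠ 0 → w l ≤ w k)
    (h2 : ∀ k l, w k = w l → φ (Finsupp.single l 1) k = if k = l then 1 else 0)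
    {A' : Type*} [AddCommGroup A'] [Module A A'] :
    Function.Injective (LinearMap.rTensor A' φ) := by
  intro x y hxy
  apply (finsuppScalarLeft A A' κ).injective
  apply PhiMap_injective w φ h1 h2
  rw [← PhiMap_natural, ← PhiMap_natural, hxy]


lemma exists_lower_bound {ι : Type*} [Fintype ι] (M : Matrix ι ι (LaurentPolynomial A)) :
    ∃ r : ℕ, ∀ i j, ∀ k : ℤ, k < -(r : ℤ) → (M i j).coeff k = 0 := by
  classical
  refine ⟨Finset.univ.sup fun p : ι × ι => (M p.1 p.2).coeff.support.sup Int.natAbs, ?_⟩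
  intro i j k hk
  by_contra h
  have hk' : k ∈ (M i j).coeff.support := Finsupp.mem_support_iff.2 h
  have h1 : Int.natAbs k ≤ (M i j).coeff.support.sup Int.natAbs := Finset.le_sup hk'
  have h2 : (M i j).coeff.support.sup Int.natAbs
      ≤ Finset.univ.sup fun p : ι × ι => (M p.1 p.2).coeff.support.sup Int.natAbs :=
    Finset.le_sup (f := fun p : ι × ι => (M p.1 p.2).coeff.support.sup Int.natAbs)
      (Finset.mem_univ (i, j))
  omega

end Aux


section Main

variable {A B : Type*} [CommRing A] [CommRing B]
    [Algebra A B] [Algebra (LaurentPolynomial A) B]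
    [IsScalarTower A (LaurentPolynomial A) B]

lemma stmt_2_aux {ι : Type*} [Fintype ι] [DecidableEq ι]
    (c : Module.Basis ι (LaurentPolynomial A) B) (f : B) :
    ∃ N : ℕ, ∀ n : ℕ, n > N →
      ∀ (A' : Type*) [AddCommGroup A'] [Module A A'],
        Function.Injective
          (LinearMap.rTensor A'
            (LinearMap.mulLeft A (1 - algebraMap (LaurentPolynomial A) B (T (n : ℤ)) * f))) := by
  classical
  set M : Matrix ι ι (LaurentPolynomial A) := LinearMap.toMatrix c c (LinearMap.mulLeft (LaurentPolynomial A) f) with hMdef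
  obtain ⟨r, hr⟩ := exists_lower_bound M
  refine ⟨r, fun n hn A' _ _ => ?_⟩
  set X : Matrix ι ι (LaurentPolynomial A) := 1 - (T (n : ℤ) : (LaurentPolynomial A)) • M with hXdef
  set g : (LaurentPolynomial A) := X.det with hg
  have hdet : LPos' (g - 1) := det_one_sub_T_smul M r hr n (by exact_mod_cast hn)
  have hg1 : g = 1 + (g - 1) := by ring
  have hg_neg : ∀ k : ℤ, k < 0 → g.coeff k = 0 := by
    intro k hk
    rw [hg1]
    show (1 : (LaurentPolynomial A)).coeff k + (g - 1).coeff k = 0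
    rw [LPos.one k hk, hdet k hk.le, add_zero]
  have hg0 : g.coeff 0 = 1 := by
    rw [hg1]
    show (1 : (LaurentPolynomial A)).coeff 0 + (g - 1).coeff 0 = 1
    rw [hdet 0 le_rfl, add_zero]
    exact Finsupp.single_eq_same
  set cElt : B := 1 - algebraMap (LaurentPolynomial A) B (T (n : ℤ)) * f with hcElt
  -- the multiplication map, matrix form
  have hml : LinearMap.mulLeft (LaurentPolynomial A) cElt
      = LinearMap.id - (T (n : ℤ) : (LaurentPolynomial A)) • LinearMap.mulLeft (LaurentPolynomial A) f := by
    apply LinearMap.ext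
    intro x
    simp [hcElt, sub_mul, one_mul, Algebra.smul_def, mul_assoc]
  have hmat : LinearMap.toMatrix c c (LinearMap.mulLeft (LaurentPolynomial A) cElt) = X := by
    rw [hml, map_sub, map_smul, LinearMap.toMatrix_id, ← hMdef, hXdef]
  -- adjugate identity
  set ψ : B →ₗ[(LaurentPolynomial A)] B := Matrix.toLin c c X.adjugate with hψ
  have hcomp : ψ ∘ₗ LinearMap.mulLeft (LaurentPolynomial A) cElt = g • (LinearMap.id : B →ₗ[(LaurentPolynomial A)] B) := by
    have h1 : LinearMap.mulLeft (LaurentPolynomial A) cElt = Matrix.toLin c c X := by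
      rw [← hmat, Matrix.toLin_toMatrix]
    rw [h1, hψ, ← Matrix.toLin_mul, Matrix.adjugate_mul, ← hg, map_smul, Matrix.toLin_one]
  -- basis of B over A
  set β : Module.Basis (ℤ × ι) A B := (lbasis A).smulTower c with hβ
  set E : B ≃ₗ[A] (ℤ × ι →₀ A) := β.repr with hE
  set sA : B →ₗ[A] B := (g • (LinearMap.id : B →ₗ[(LaurentPolynomial A)] B)).restrictScalars A with hsA
  set φ' : (ℤ × ι →₀ A) →ₗ[A] (ℤ × ι →₀ A)
    := E.toLinearMap ∘ₗ sA ∘ₗ E.symm.toLinearMap with hφ'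
  -- coefficient computation
  have hcoeff : ∀ (l : ℤ) (j : ι) (k : ℤ) (i : ι),
      φ' (Finsupp.single (l, j) 1) (k, i) = if j = i then g.coeff (k - l) else 0 := by
    intro l j k i
    have e1 : E.symm (Finsupp.single (l, j) 1) = β (l, j) := β.repr_symm_single_one _
    have e2 : φ' (Finsupp.single (l, j) 1) = β.repr (g • β (l, j)) := by
      rw [hφ']
      simp only [LinearMap.coe_comp, Function.comp_apply, LinearEquiv.coe_coe, e1]
      rfl
    rw [e2]
    have e3 : β (l, j) = (T l : (LaurentPolynomial A)) • c j := by
      rw [hβ, Module.Basis.smulTower_apply, lbasis_apply]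
    rw [Module.Basis.smulTower_repr]
    have e4 : c.repr (g • β (l, j)) i = if j = i then g * (T l : (LaurentPolynomial A)) else 0 := by
      rw [e3, smul_smul, map_smul, Module.Basis.repr_self, Finsupp.smul_apply,
        Finsupp.single_apply]
      split <;> simp
    rw [e4]
    split
    · rw [lbasis_repr_apply]
      simpa [sub_eq_add_neg] using AddMonoidAlgebra.coeff_mul_single_apply g (1 : A) l k
    · rw [lbasis_repr_apply]
      rfl
  -- triangularity hypotheses
  have h1 : ∀ k l : ℤ × ι, φ' (Finsupp.single l 1) k ≠ 0 → l.1 ≤ k.1 := by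
    rintro ⟨k, i⟩ ⟨l, j⟩ hne
    rw [hcoeff] at hne
    by_contra hlt
    rcases eq_or_ne j i with hji | hji
    · rw [if_pos hji, hg_neg (k - l) (by omega)] at hne
      exact hne rfl
    · rw [if_neg hji] at hne
      exact hne rfl
  have h2 : ∀ k l : ℤ × ι, k.1 = l.1 →
      φ' (Finsupp.single l 1) k = if k = l then 1 else 0 := by
    rintro ⟨k, i⟩ ⟨l, j⟩ hkl
    simp only at hkl
    rw [hcoeff, hkl, sub_self]
    rcases eq_or_ne j i with hji | hji
    · rw [if_pos hji, hg0, if_pos (by simp [Prod.ext_iff, hkl, hji.symm])]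
    · rw [if_neg hji, if_neg (show ¬((l, i) = (l, j)) from
        fun h => hji (congrArg Prod.snd h).symm)]
  -- injectivity of rTensor φ'
  have hinjφ' : Function.Injective (LinearMap.rTensor A' φ') :=
    rTensor_injective_of_triangular (fun k : ℤ × ι => k.1) φ' h1 h2
  -- transfer through the equivalence
  have hEfact : sA = E.symm.toLinearMap ∘ₗ φ' ∘ₗ E.toLinearMap := by
    apply LinearMap.ext
    intro x
    simp [hφ']
  have hinj_sA : Function.Injective (LinearMap.rTensor A' sA) := by
    rw [hEfact, LinearMap.rTensor_comp, LinearMap.rTensor_comp]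
    have hEinj : Function.Injective (LinearMap.rTensor A' E.toLinearMap) := by
      have : Function.LeftInverse (LinearMap.rTensor A' E.symm.toLinearMap)
          (LinearMap.rTensor A' E.toLinearMap) := by
        intro x
        rw [← LinearMap.comp_apply, ← LinearMap.rTensor_comp]
        have : E.symm.toLinearMap ∘ₗ E.toLinearMap = LinearMap.id := by
          apply LinearMap.ext; intro y; simp
        rw [this, LinearMap.rTensor_id, LinearMap.id_apply]
      exact this.injective
    have hEsinj : Function.Injective (LinearMap.rTensor A' E.symm.toLinearMap) := by
      have : Function.LeftInverse (LinearMap.rTensor A' E.toLinearMap)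
          (LinearMap.rTensor A' E.symm.toLinearMap) := by
        intro x
        rw [← LinearMap.comp_apply, ← LinearMap.rTensor_comp]
        have : E.toLinearMap ∘ₗ E.symm.toLinearMap = LinearMap.id := by
          apply LinearMap.ext; intro y; simp
        rw [this, LinearMap.rTensor_id, LinearMap.id_apply]
      exact this.injective
    simp only [LinearMap.coe_comp]
    exact hEsinj.comp (hinjφ'.comp hEinj)
  -- final composition
  have hml2 : LinearMap.mulLeft A cElt = (LinearMap.mulLeft (LaurentPolynomial A) cElt).restrictScalars A := by
    apply LinearMap.ext; intro x; rfl
  have hfinal : (ψ.restrictScalars A) ∘ₗ (LinearMap.mulLeft A cElt) = sA := by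
    rw [hml2, hsA, ← hcomp]
    apply LinearMap.ext; intro x; rfl
  intro x y hxy
  apply hinj_sA
  rw [← hfinal, LinearMap.rTensor_comp]
  simp only [LinearMap.coe_comp, Function.comp_apply]
  rw [hxy]

end Main

/-- If `B` is a finite free `A[t,t⁻¹]`-algebra and `f ∈ B`, then for `n` large,
multiplication by `1 - tⁿf` on `B` is universally injective over `A`. -/
theorem stmt_2 (A B : Type*) [CommRing A] [CommRing B]
    [Algebra A B] [Algebra (LaurentPolynomial A) B]
    [IsScalarTower A (LaurentPolynomial A) B]
    [Module.Free (LaurentPolynomial A) B] [Module.Finite (LaurentPolynomial A) B]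
    (f : B) :
    ∃ N : ℕ, ∀ n : ℕ, n > N →
      ∀ (A' : Type*) [AddCommGroup A'] [Module A A'],
        Function.Injective
          (LinearMap.rTensor A'
            (LinearMap.mulLeft A (1 - algebraMap (LaurentPolynomial A) B (T (n : ℤ)) * f))) := by
  classical
  exact stmt_2_aux (Module.Free.chooseBasis (LaurentPolynomial A) B) f
end

section
/- Let A be a commutative ring, B a commutative A[t,t⁻¹]-algebra that is finite free as an A[t,t⁻¹]-module, and f ∈ B. Then there exists N such that for all n > N, the quotient ring B/(1 − tⁿ f)B is a flat A-module. -/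
open LaurentPolynomial

section FlatQuot

open TensorProduct LinearMap

/-- If `B` is a flat `A`-algebra and multiplication by `g` "preserves" `I`-torsion
coordinates for every ideal `I`, then `B/(g)` is flat over `A`. -/
theorem flat_quot_of_mul (A B : Type*) [CommRing A] [CommRing B] [Algebra A B]
    [Module.Flat A B] (g : B)
    (H : ∀ (I : Ideal A) (x : B), g * x ∈ I • (⊤ : Submodule A B) →
      x ∈ I • (⊤ : Submodule A B)) :
    Module.Flat A (B ⧸ Ideal.span {g}) := by
  rw [Module.Flat.iff_lift_lsmul_comp_subtype_injective]
  intro I hFG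
  set Q := B ⧸ Ideal.span {g}
  set μB : I ⊗[A] B →ₗ[A] B := TensorProduct.lift ((lsmul A B).comp I.subtype) with hμB
  set μQ : I ⊗[A] Q →ₗ[A] Q := TensorProduct.lift ((lsmul A Q).comp I.subtype) with hμQ
  have hinjB : Function.Injective μB := (Module.Flat.iff_lift_lsmul_comp_subtype_injective (R := A) (M := B)).mp inferInstance hFG
  set π : B →ₗ[A] Q := (Ideal.Quotient.mkₐ A (Ideal.span {g})).toLinearMap with hπ
  have hπsurj : Function.Surjective π := Ideal.Quotient.mk_surjective
  set mg : B →ₗ[A] B := LinearMap.mulLeft A g with hmg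
  have hexact : Function.Exact mg π := by
    intro y
    constructor
    · intro hy
      have : y ∈ Ideal.span {g} := by
        rwa [hπ, AlgHom.toLinearMap_apply, Ideal.Quotient.mkₐ_eq_mk,
          Ideal.Quotient.eq_zero_iff_mem] at hy
      obtain ⟨c, hc⟩ := Ideal.mem_span_singleton.mp this
      exact ⟨c, by simp [hmg, hc]⟩
    · rintro ⟨c, rfl⟩
      have : g * c ∈ Ideal.span {g} := Ideal.mul_mem_right _ _ (Ideal.subset_span rfl)
      simp only [hπ, hmg, AlgHom.toLinearMap_apply, Ideal.Quotient.mkₐ_eq_mk,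
        LinearMap.mulLeft_apply]
      rwa [Ideal.Quotient.eq_zero_iff_mem]
  have hTexact : Function.Exact (lTensor I mg) (lTensor I π) :=
    lTensor_exact I hexact hπsurj
  have hTsurj : Function.Surjective (lTensor I π) := lTensor_surjective I hπsurj
  have c1 : μQ.comp (lTensor I π) = π.comp μB := by
    apply TensorProduct.ext'
    intro i b
    simp [hμQ, hμB]
  have c2 : μB.comp (lTensor I mg) = mg.comp μB := by
    apply TensorProduct.ext'
    intro i b
    simp [hμB, hmg, mul_smul_comm]
  have hrange : ∀ y : I ⊗[A] B, μB y ∈ I • (⊤ : Submodule A B) := by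
    intro y
    induction y with
    | zero => simp
    | tmul i b =>
      simpa [hμB] using Submodule.smul_mem_smul i.2 (Submodule.mem_top (x := b))
    | add y₁ y₂ h1 h2 => rw [map_add]; exact Submodule.add_mem _ h1 h2
  have hsurj' : ∀ c ∈ I • (⊤ : Submodule A B), ∃ w, μB w = c := by
    intro c hc
    refine Submodule.smul_induction_on hc (fun i hi m _ => ⟨⟨i, hi⟩ ⊗ₜ m, by simp [hμB]⟩) ?_
    rintro x y ⟨w₁, rfl⟩ ⟨w₂, rfl⟩
    exact ⟨w₁ + w₂, map_add _ _ _⟩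
  rw [injective_iff_map_eq_zero]
  intro z hz
  obtain ⟨y, rfl⟩ := hTsurj z
  have h1 : π (μB y) = 0 := by
    have := congrArg (fun m => m y) c1
    simp only [LinearMap.comp_apply] at this
    rw [← this, hz]
  obtain ⟨c, hc⟩ := Ideal.mem_span_singleton.mp
    ((Ideal.Quotient.eq_zero_iff_mem).mp (by simpa [hπ] using h1))
  have hcI : c ∈ I • (⊤ : Submodule A B) := H I c (hc ▸ hrange y)
  obtain ⟨w, hw⟩ := hsurj' c hcI
  have : μB (lTensor I mg w) = μB y := by
    have := congrArg (fun m => m w) c2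
    simp only [LinearMap.comp_apply] at this
    rw [this, hmg]
    simp [hw, hc]
  have hy : y = lTensor I mg w := (hinjB this).symm
  rw [hy]
  exact hTexact.apply_apply_eq_zero w

end FlatQuot

section Aux

variable {A B : Type*} [CommRing A] [CommRing B]
    [Algebra A B] [Algebra (LaurentPolynomial A) B]
    [IsScalarTower A (LaurentPolynomial A) B]

theorem aux_T_mul_coeff (n : ℕ) (q : LaurentPolynomial A) (e : ℤ) :
    ((T (n : ℤ) : LaurentPolynomial A) * q).coeff e = q.coeff (e - (n : ℤ)) := by
  have h := AddMonoidAlgebra.coeff_single_mul_apply q (1 : A) (n : ℤ) e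
  rw [T]
  rw [h, one_mul, neg_add_eq_sub]

variable {ι : Type*} [Fintype ι] (b : Module.Basis ι (LaurentPolynomial A) B)

set_option linter.unusedSectionVars false

theorem mem_smul_top_iff_coeff (I : Ideal A) (x : B) :
    x ∈ I • (⊤ : Submodule A B) ↔ ∀ (i : ι) (e : ℤ), (b.repr x i).coeff e ∈ I := by
  constructor
  · intro hx i e
    refine Submodule.smul_induction_on hx ?_ ?_
    · intro a ha y _
      have hs : b.repr (a • y) = a • b.repr y :=
        LinearMap.map_smul_of_tower
          (↑b.repr : B →ₗ[LaurentPolynomial A] (ι →₀ LaurentPolynomial A)) a y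
      rw [hs, Finsupp.smul_apply, AddMonoidAlgebra.coeff_smul_apply, smul_eq_mul]
      exact Ideal.mul_mem_right _ _ ha
    · intro y z hy hz
      rw [map_add, Finsupp.add_apply, AddMonoidAlgebra.coeff_add, Finsupp.add_apply]
      exact Ideal.add_mem _ hy hz
  · intro h
    rw [← b.sum_repr x]
    refine Submodule.sum_mem _ fun i _ => ?_
    set r : LaurentPolynomial A := b.repr x i with hr
    have hr' : r = r.coeff.sum fun e a => AddMonoidAlgebra.single e a := (AddMonoidAlgebra.sum_coeff_single r).symm
    rw [hr']
    rw [Finsupp.sum, Finset.sum_smul]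
    refine Submodule.sum_mem _ fun e _ => ?_
    have h1 : (AddMonoidAlgebra.single e (r.coeff e) : LaurentPolynomial A) = (r.coeff e) • T e := by
      rw [T]
      rw [AddMonoidAlgebra.smul_single, smul_eq_mul, mul_one]
    rw [h1, smul_assoc]
    exact Submodule.smul_mem_smul (h i e) Submodule.mem_top

/-- The key coefficient-wise injectivity. -/
theorem aux_key (f : B) (N : ℕ)
    (hm : ∀ (i j : ι) (e : ℤ), e < -(N : ℤ) → (b.repr (f * b j) i).coeff e = 0)
    (n : ℕ) (hn : n > N) (I : Ideal A) (x : B)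
    (hgx : ∀ (i : ι) (e : ℤ),
      (b.repr ((1 - algebraMap (LaurentPolynomial A) B (T (n : ℤ)) * f) * x) i).coeff e ∈ I) :
    ∀ (i : ι) (e : ℤ), (b.repr x i).coeff e ∈ I := by
  classical
  set R := LaurentPolynomial A
  set g : B := 1 - algebraMap R B (T (n : ℤ)) * f with hg
  have hxgx : x = g * x + (T (n : ℤ) : R) • (f * x) := by
    rw [Algebra.smul_def, hg]
    ring
  have h2 : ∀ i, b.repr (f * x) i = ∑ j, (b.repr x j) * (b.repr (f * b j) i) := by
    intro i
    have : f * x = ∑ j, (b.repr x j) • (f * b j) := by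
      conv_lhs => rw [← b.sum_repr x]
      rw [Finset.mul_sum]
      exact Finset.sum_congr rfl fun j _ => mul_smul_comm ((b.repr x) j) f (b j)
    rw [this, map_sum, Finsupp.finset_sum_apply]
    exact Finset.sum_congr rfl fun j _ => by rw [map_smul, Finsupp.smul_apply, smul_eq_mul]
  have hcoeff : ∀ (i : ι) (e : ℤ), (b.repr x i).coeff e
      = (b.repr (g * x) i).coeff e
        + ∑ j, ((b.repr x j) * (b.repr (f * b j) i)).coeff (e - (n : ℤ)) := by
    intro i e
    conv_lhs => rw [hxgx]
    rw [map_add, map_smul, Finsupp.add_apply, Finsupp.smul_apply, smul_eq_mul,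
      AddMonoidAlgebra.coeff_add, Finsupp.add_apply, aux_T_mul_coeff, h2,
      AddMonoidAlgebra.coeff_sum, Finsupp.finset_sum_apply]
  set s' : Finset ℤ := Finset.univ.sup fun i : ι => (b.repr x i).coeff.support with hs'
  set E : ℤ := -(s'.sup fun e => e.natAbs : ℕ) with hEdef
  have hE : ∀ (i : ι) (e : ℤ), e < E → (b.repr x i).coeff e = 0 := by
    intro i e he
    by_contra h
    have hmem : e ∈ s' := by
      rw [hs', Finset.mem_sup]
      exact ⟨i, Finset.mem_univ i, Finsupp.mem_support_iff.mpr h⟩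
    have : e.natAbs ≤ (s'.sup fun e => e.natAbs) := Finset.le_sup hmem
    omega
  have main : ∀ (d : ℕ) (i : ι) (e : ℤ), e < E + d → (b.repr x i).coeff e ∈ I := by
    intro d
    induction d with
    | zero =>
      intro i e he
      rw [hE i e (by omega)]
      exact I.zero_mem
    | succ d ih =>
      intro i e he
      by_cases hlt : e < E + d
      · exact ih i e hlt
      have IH : ∀ (j : ι) (e' : ℤ), e' < e → (b.repr x j).coeff e' ∈ I := by
        intro j e' h'
        exact ih j e' (by omega)
      rw [hcoeff i e]
      refine I.add_mem (hgx i e) (Ideal.sum_mem _ fun j _ => ?_)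
      rw [AddMonoidAlgebra.coeff_mul]
      rw [Finsupp.sum]
      refine Ideal.sum_mem _ fun a₁ ha₁ => ?_
      rw [Finsupp.sum]
      refine Ideal.sum_mem _ fun a₂ ha₂ => ?_
      split_ifs with hcond
      · have ha₂' : ¬ (a₂ < -(N : ℤ)) := fun hc =>
          (Finsupp.mem_support_iff.mp ha₂) (hm i j a₂ hc)
        exact Ideal.mul_mem_right _ _ (IH j a₁ (by omega))
      · exact I.zero_mem
  intro i e
  exact main (e - E + 1).toNat i e (by have := Int.self_le_toNat (e - E + 1); omega)

end Aux

/-- If `B` is a finite free `A[t,t⁻¹]`-algebra and `f ∈ B`, then for `n` large,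
`B/(1 - tⁿf)B` is a flat `A`-module. -/
theorem stmt_3 (A B : Type*) [CommRing A] [CommRing B]
    [Algebra A B] [Algebra (LaurentPolynomial A) B]
    [IsScalarTower A (LaurentPolynomial A) B]
    [Module.Free (LaurentPolynomial A) B] [Module.Finite (LaurentPolynomial A) B]
    (f : B) :
    ∃ N : ℕ, ∀ n : ℕ, n > N →
      Module.Flat A
        (B ⧸ Ideal.span {1 - algebraMap (LaurentPolynomial A) B (T (n : ℤ)) * f}) := by
  classical
  set R := LaurentPolynomial A
  have : Module.Flat A B := by
    have : Module.Free A R := inferInstanceAs (Module.Free A (AddMonoidAlgebra A ℤ))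
    have : Module.Flat A R := Module.Flat.of_free
    exact Module.Flat.trans A R B
  let b := Module.Free.chooseBasis R B
  set ι := Module.Free.ChooseBasisIndex R B
  let s : Finset ℤ := Finset.univ.sup fun ij : ι × ι => (b.repr (f * b ij.2) ij.1).coeff.support
  refine ⟨s.sup fun e => e.natAbs, fun n hn => ?_⟩
  set N : ℕ := s.sup fun e => e.natAbs with hN
  have hm : ∀ (i j : ι) (e : ℤ), e < -(N : ℤ) → (b.repr (f * b j) i).coeff e = 0 := by
    intro i j e he
    by_contra h
    have hmem : e ∈ s := by
      rw [Finset.mem_sup]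
      exact ⟨(i, j), Finset.mem_univ _, Finsupp.mem_support_iff.mpr h⟩
    have : e.natAbs ≤ N := Finset.le_sup hmem
    omega
  refine flat_quot_of_mul A B _ fun I x hgx => ?_
  rw [mem_smul_top_iff_coeff b] at hgx ⊢
  exact aux_key b f N hm n hn I x hgx
end

section
/- Let A be a commutative ring, B an A-algebra which is finite free of rank d over A[t,t⁻¹], and f₁, f₂ ∈ B. Then there exists N such that for all n > N and all natural numbers a, b ≥ 0, multiplication by 1 − tⁿ·(f₁·tᵃ + f₂·tᵇ) is universally injective as an A-linear map B → B. -/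
open LaurentPolynomial

section Aux

variable {A : Type*} [CommRing A]

/-- Coefficient of a Laurent polynomial, viewed through the `Finsupp` structure. -/
noncomputable def stmt18.lcoeff (p : LaurentPolynomial A) (k : ℤ) : A := p.coeff k

namespace stmt18

/-- The standard `A`-basis of `A[T;T⁻¹]`. -/
noncomputable def lb (A : Type*) [CommRing A] : Module.Basis ℤ A (LaurentPolynomial A) :=
  Module.Basis.ofRepr (AddMonoidAlgebra.coeffLinearEquiv A)

theorem lb_repr (p : LaurentPolynomial A) (k : ℤ) : (lb A).repr p k = lcoeff p k := rfl

theorem lb_apply (m : ℤ) : lb A m = T m := by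
  rw [show (T m : LaurentPolynomial A) = AddMonoidAlgebra.single m 1 from rfl]; rfl

theorem lcoeff_T_mul (m k : ℤ) (p : LaurentPolynomial A) :
    lcoeff (T m * p) k = lcoeff p (k - m) := by
  have h := AddMonoidAlgebra.coeff_single_mul_apply p 1 m k
  have e : (T m : LaurentPolynomial A) = AddMonoidAlgebra.single m 1 := rfl
  rw [lcoeff, lcoeff, e, h, one_mul]
  congr 1; omega

theorem lcoeff_add (p q : LaurentPolynomial A) (k : ℤ) :
    lcoeff (p + q) k = lcoeff p k + lcoeff q k := rfl

theorem lcoeff_sub (p q : LaurentPolynomial A) (k : ℤ) :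
    lcoeff (p - q) k = lcoeff p k - lcoeff q k := rfl

theorem lcoeff_one (k : ℤ) : lcoeff (1 : LaurentPolynomial A) k = if k = 0 then 1 else 0 := by
  rw [← T_zero, lcoeff, T_apply]
  simp [eq_comm]

theorem lcoeff_zero (k : ℤ) : lcoeff (0 : LaurentPolynomial A) k = 0 := rfl

/-- Support of a Laurent polynomial. -/
noncomputable def lsupp (p : LaurentPolynomial A) : Finset ℤ :=
  Finsupp.support (α := ℤ) (M := A) p.coeff

theorem lcoeff_eq_zero (p : LaurentPolynomial A) (k : ℤ)
    (h : k ∉ lsupp p) : lcoeff p k = 0 := by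
  rw [lcoeff]; exact Finsupp.notMem_support_iff.mp h

/-- Coefficients sufficiently below the uniform bound vanish. -/
theorem lcoeff_eq_zero_of_le {ι : Type*} (c : ι → LaurentPolynomial A) (t : Finset ι)
    (i : ι) (hi : i ∈ t) (s : ℤ)
    (hs : s ≤ -((t.sup fun i => (lsupp (c i)).sup fun k => (1 - k).toNat : ℕ) : ℤ) - 1) :
    lcoeff (c i) s = 0 := by
  apply lcoeff_eq_zero
  intro hmem
  have h1 : (1 - s).toNat ≤ (lsupp (c i)).sup fun k => (1 - k).toNat :=
    Finset.le_sup (f := fun k => (1 - k).toNat) hmem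
  have h2 : ((lsupp (c i)).sup fun k => (1 - k).toNat) ≤
      t.sup fun i => (lsupp (c i)).sup fun k => (1 - k).toNat :=
    Finset.le_sup (f := fun i => (lsupp (c i)).sup fun k => (1 - k).toNat) hi
  omega

end stmt18

end Aux

open stmt18 TensorProduct in
/-- If `B` is finite free of rank `d` over `A[t,t⁻¹]` and `f₁, f₂ ∈ B`, then for `n` large
and all `a, b ≥ 0`, multiplication by `1 - tⁿ·(f₁·tᵃ + f₂·tᵇ)` is universally injective
as an `A`-linear map `B → B`. -/
theorem stmt_18 (A B : Type*) [CommRing A] [CommRing B]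
    [Algebra A B] [Algebra (LaurentPolynomial A) B]
    [IsScalarTower A (LaurentPolynomial A) B]
    (d : ℕ) (bas : Module.Basis (Fin d) (LaurentPolynomial A) B)
    (f₁ f₂ : B) :
    ∃ N : ℕ, ∀ n : ℕ, n > N → ∀ a b : ℕ,
      ∀ (A' : Type*) [AddCommGroup A'] [Module A A'],
        Function.Injective
          (LinearMap.rTensor A'
            (LinearMap.mulLeft A
              (1 - algebraMap (LaurentPolynomial A) B (T (n : ℤ)) *
                (f₁ * algebraMap (LaurentPolynomial A) B (T (a : ℤ)) +
                  f₂ * algebraMap (LaurentPolynomial A) B (T (b : ℤ)))))) := by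
  classical
  -- the uniform bound
  set c₁ : Fin d × Fin d → LaurentPolynomial A := fun p => bas.repr (f₁ * bas p.1) p.2 with hc₁
  set c₂ : Fin d × Fin d → LaurentPolynomial A := fun p => bas.repr (f₂ * bas p.1) p.2 with hc₂
  set N₁ : ℕ := Finset.univ.sup fun p : Fin d × Fin d =>
    (lsupp (c₁ p)).sup fun k => (1 - k).toNat with hN₁
  set N₂ : ℕ := Finset.univ.sup fun p : Fin d × Fin d =>
    (lsupp (c₂ p)).sup fun k => (1 - k).toNat with hN₂
  refine ⟨max N₁ N₂, ?_⟩
  intro n hn a b A' _ _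
  set u : B := 1 - algebraMap (LaurentPolynomial A) B (T (n : ℤ)) *
      (f₁ * algebraMap (LaurentPolynomial A) B (T (a : ℤ)) +
        f₂ * algebraMap (LaurentPolynomial A) B (T (b : ℤ))) with hu
  set φ : B →ₗ[A] B := LinearMap.mulLeft A u with hφ
  -- A-basis of B
  set bA : Module.Basis (ℤ × Fin d) A B := (lb A).smulTower bas with hbA
  have key0 : ∀ i : Fin d, u * bas i =
      bas i - ((T ((n : ℤ) + a) : LaurentPolynomial A) • (f₁ * bas i) + (T ((n : ℤ) + b) : LaurentPolynomial A) • (f₂ * bas i)) := by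
    intro i
    rw [hu, sub_mul, one_mul]
    congr 1
    rw [mul_assoc, add_mul,
      mul_comm f₁ (algebraMap (LaurentPolynomial A) B (T (a : ℤ))),
      mul_comm f₂ (algebraMap (LaurentPolynomial A) B (T (b : ℤ))),
      mul_assoc, mul_assoc]
    simp only [← Algebra.smul_def]
    rw [T_add (R := A), T_add (R := A), mul_smul, mul_smul, ← smul_add]
  have key : ∀ (i j : Fin d) (m k : ℤ), k ≤ m →
      bA.repr (u * bA (m, i)) (k, j) = if (k, j) = (m, i) then 1 else 0 := by
    intro i j m k hkm
    have h1 : bA (m, i) = (T m : LaurentPolynomial A) • bas i := by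
      rw [hbA, Module.Basis.smulTower_apply, lb_apply]
    rw [h1, mul_smul_comm, hbA, Module.Basis.smulTower_repr]
    simp only [map_smul, Finsupp.smul_apply, smul_eq_mul, lb_repr]
    rw [key0 i, map_sub, map_add, map_smul, map_smul]
    simp only [Finsupp.sub_apply, Finsupp.add_apply, Finsupp.smul_apply, smul_eq_mul,
      Module.Basis.repr_self]
    rw [mul_sub, mul_add, lcoeff_sub, lcoeff_add,
      ← mul_assoc, ← mul_assoc, ← T_add, ← T_add,
      lcoeff_T_mul, lcoeff_T_mul, lcoeff_T_mul]
    rw [show bas.repr (f₁ * bas i) j = c₁ (i, j) from rfl,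
      show bas.repr (f₂ * bas i) j = c₂ (i, j) from rfl]
    rw [lcoeff_eq_zero_of_le c₁ Finset.univ (i, j) (Finset.mem_univ _) _ (by omega),
      lcoeff_eq_zero_of_le c₂ Finset.univ (i, j) (Finset.mem_univ _) _ (by omega)]
    rw [add_zero, sub_zero, Finsupp.single_apply]
    by_cases hij : i = j
    · subst hij
      rw [if_pos rfl, lcoeff_one]
      by_cases hmk : k = m
      · subst hmk; simp
      · rw [if_neg (by omega), if_neg (fun h => hmk (congrArg Prod.fst h))]
    · rw [if_neg hij, lcoeff_zero,
        if_neg (fun h => hij ((congrArg Prod.snd h).symm))]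
  -- the tensor product equivalence
  set e : (B ⊗[A] A') ≃ₗ[A] ((ℤ × Fin d) →₀ A') :=
    (TensorProduct.congr bA.repr (LinearEquiv.refl A A')).trans
      (TensorProduct.finsuppScalarLeft A A' (ℤ × Fin d)) with he
  have F1 : ∀ (z : B) (a' : A') (p : ℤ × Fin d), e (z ⊗ₜ[A] a') p = bA.repr z p • a' := by
    intro z a' p
    rw [he]
    simp only [LinearEquiv.trans_apply, TensorProduct.congr_tmul, LinearEquiv.refl_apply,
      TensorProduct.finsuppScalarLeft_apply_tmul_apply]
  have F2 : ∀ (p : ℤ × Fin d) (a' : A'), e.symm (Finsupp.single p a') = bA p ⊗ₜ[A] a' := by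
    intro p a'
    apply e.injective
    rw [e.apply_symm_apply]
    ext p'
    rw [F1, Module.Basis.repr_self, Finsupp.single_apply, Finsupp.single_apply]
    by_cases h : p = p' <;> simp [h]
  -- main claim
  have C : ∀ (y : (ℤ × Fin d) →₀ A') (j : Fin d) (k : ℤ),
      (∀ p ∈ y.support, k ≤ p.1) →
      e (LinearMap.rTensor A' φ (e.symm y)) (k, j) = y (k, j) := by
    intro y
    induction y using Finsupp.induction with
    | zero => intro j k _; simp
    | single_add p a' f hp ha IH =>
      intro j k hsupp
      have hdis : Disjoint (Finsupp.single p a').support f.support := by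
        rw [Finsupp.support_single_ne_zero p ha]
        simpa using hp
      have hse : (Finsupp.single p a' + f).support =
          (Finsupp.single p a').support ∪ f.support := Finsupp.support_add_eq hdis
      have hsuppf : ∀ p' ∈ f.support, k ≤ p'.1 := by
        intro p' hp'
        exact hsupp p' (by rw [hse]; exact Finset.mem_union_right _ hp')
      have hkp : k ≤ p.1 := by
        apply hsupp p
        rw [hse]
        exact Finset.mem_union_left _ (by
          rw [Finsupp.support_single_ne_zero p ha]; exact Finset.mem_singleton_self p)
      rw [map_add, map_add, map_add, Finsupp.add_apply, Finsupp.add_apply, IH j k hsuppf]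
      congr 1
      rw [F2, LinearMap.rTensor_tmul, F1]
      obtain ⟨m, i⟩ := p
      have : φ (bA (m, i)) = u * bA (m, i) := rfl
      rw [this, key i j m k hkp, Finsupp.single_apply]
      by_cases h : (k, j) = (m, i)
      · rw [if_pos h, if_pos h.symm, one_smul]
      · rw [if_neg h, if_neg (fun hh => h hh.symm), zero_smul]
  -- conclude injectivity
  intro x₁ x₂ hx
  suffices h : ∀ x : B ⊗[A] A', LinearMap.rTensor A' φ x = 0 → x = 0 by
    have := h (x₁ - x₂) (by rw [map_sub, hx, sub_self])
    exact sub_eq_zero.mp this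
  intro x hx0
  by_contra hxne
  have hyne : e x ≠ 0 := fun h => hxne (by simpa using congrArg e.symm h)
  have hsupp : (e x).support.Nonempty := Finsupp.support_nonempty_iff.mpr hyne
  set k₀ : ℤ := ((e x).support.image Prod.fst).min' (hsupp.image _) with hk₀
  obtain ⟨p, hpmem, hpk⟩ := Finset.mem_image.mp
    (((e x).support.image Prod.fst).min'_mem (hsupp.image _))
  have hmin : ∀ p' ∈ (e x).support, k₀ ≤ p'.1 := fun p' hp' =>
    Finset.min'_le _ _ (Finset.mem_image_of_mem _ hp')
  have hC := C (e x) p.2 k₀ hmin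
  rw [e.symm_apply_apply, hx0, map_zero] at hC
  have : (e x) (k₀, p.2) = 0 := by rw [← hC]; rfl
  have hpe : (k₀, p.2) = p := Prod.ext (hk₀.trans hpk.symm) rfl
  rw [hpe] at this
  exact Finsupp.mem_support_iff.mp hpmem this
end
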